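/- There exists a universal constant C > 0 such that the following holds. Let G = (V, E) be a connected ℓ-tangle free graph with ℓ ≥ 5, let G̃ = (Ṽ, Ẽ) be a connected subgraph of G with diameter at most (ℓ−2)/3, and let S be the collection of all cycle edges of G incident to Ṽ but not contained in Ẽ. Then |S| ≤ 6 + 16|E|/ℓ. -/

import Mathlib

/-- An edge `e` of a graph `G` is a *cycle edge* if it belongs to some cycle of `G`. -/
def SimpleGraph.IsCycleEdge {V : Type*} (G : SimpleGraph V) (e : Sym2 V) : Prop :=
  ∃ (v : V) (c : G.Walk v v), c.IsCycle ∧ e ∈ c.edges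

/-- A graph `G` is `ℓ`-*tangle free* if every ball of radius `ℓ` contains at most one cycle:
any two cycles whose vertices all lie within distance `ℓ` of a common vertex have the same
edge set. -/
def SimpleGraph.TangleFree {V : Type*} (G : SimpleGraph V) (ℓ : ℕ) : Prop :=
  ∀ (v u₁ u₂ : V) (c₁ : G.Walk u₁ u₁) (c₂ : G.Walk u₂ u₂),
    c₁.IsCycle → c₂.IsCycle →
    (∀ x ∈ c₁.support, G.dist v x ≤ ℓ) → (∀ x ∈ c₂.support, G.dist v x ≤ ℓ) →
    (∀ e, e ∈ c₁.edges ↔ e ∈ c₂.edges)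

open SimpleGraph

namespace StmtTwo

set_option linter.unusedSectionVars false
set_option maxHeartbeats 1000000

variable {W : Type*}

lemma reachable_aux {H : SimpleGraph W} {e : Sym2 W} {x y : W}
    (w : H.Walk x y)
    (hend : ∀ a b : W, s(a,b) = e → (H \ fromEdgeSet {e}).Reachable a b) :
    (H \ fromEdgeSet {e}).Reachable x y := by
  induction w with
  | nil => exact Reachable.refl _
  | @cons a b c hadj p ih =>
    refine Reachable.trans ?_ ih
    by_cases he : s(a, b) = e
    · exact hend a b he
    · refine Adj.reachable ?_
      simp only [sdiff_adj, fromEdgeSet_adj, Set.mem_singleton_iff]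
      exact ⟨hadj, fun hmem => he hmem.1⟩

lemma connected_sdiff_of_cycle {H : SimpleGraph W} (hc : H.Connected)
    {u : W} {c : H.Walk u u} (hcyc : c.IsCycle) {e : Sym2 W} (he : e ∈ c.edges) :
    (H \ fromEdgeSet {e}).Connected := by
  rw [connected_iff]
  refine ⟨fun x y => ?_, hc.nonempty⟩
  obtain ⟨w⟩ := hc.preconnected x y
  refine reachable_aux w ?_
  rintro a b rfl
  exact (adj_and_reachable_delete_edges_iff_exists_cycle.mpr ⟨u, c, hcyc, he⟩).2

lemma edgeSet_sdiff_singleton {H : SimpleGraph W} {e : Sym2 W} :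
    (H \ fromEdgeSet {e}).edgeSet = H.edgeSet \ {e} := by
  rw [edgeSet_sdiff, edgeSet_fromEdgeSet, edgeSet_sdiff_sdiff_isDiag]

lemma exists_edge_of_cycle {u : W} {H : SimpleGraph W} {c : H.Walk u u} (hcyc : c.IsCycle) :
    ∃ e, e ∈ c.edges := by
  have h3 := hcyc.three_le_length
  have : c.edges ≠ [] := by
    intro h
    have := c.length_edges
    rw [h] at this
    simp at this
    omega
  exact List.exists_mem_of_ne_nil _ this

lemma not_acyclic_of_cycle {H : SimpleGraph W} {u : W} {c : H.Walk u u} (hcyc : c.IsCycle) :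
    ¬ H.IsAcyclic := fun hac => hac c hcyc

lemma exists_cycle_of_not_acyclic {H : SimpleGraph W} (h : ¬ H.IsAcyclic) :
    ∃ (u : W) (c : H.Walk u u), c.IsCycle := by
  unfold SimpleGraph.IsAcyclic at h
  push_neg at h
  obtain ⟨u, c, hc⟩ := h
  exact ⟨u, c, hc⟩

lemma tree_count [Fintype W] {H : SimpleGraph W} (hc : H.Connected) (hac : H.IsAcyclic) :
    H.edgeSet.ncard + 1 = Fintype.card W := by
  classical
  have ht : H.IsTree := ⟨hc, hac⟩
  haveI : Fintype ↑H.edgeSet := Set.Finite.fintype (Set.toFinite _)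
  have := ht.card_edgeFinset
  rwa [edgeFinset, ← Set.ncard_eq_toFinset_card'] at this

lemma M1_aux [Fintype W] : ∀ (n : ℕ) (H : SimpleGraph W), H.Connected → H.edgeSet.ncard = n →
    Fintype.card W ≤ n + 1 := by
  intro n
  induction n using Nat.strong_induction_on with
  | _ n ih =>
    intro H hc hn
    by_cases hac : H.IsAcyclic
    · rw [← hn, tree_count hc hac]
    · obtain ⟨u, c, hcyc⟩ := exists_cycle_of_not_acyclic hac
      obtain ⟨e, he⟩ := exists_edge_of_cycle hcyc
      have heH : e ∈ H.edgeSet := c.edges_subset_edgeSet he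
      have hc' : (H \ fromEdgeSet {e}).Connected := connected_sdiff_of_cycle hc hcyc he
      have hcard : (H \ fromEdgeSet {e}).edgeSet.ncard = n - 1 := by
        rw [edgeSet_sdiff_singleton, Set.ncard_diff_singleton_of_mem heH, hn]
      have hpos : 1 ≤ n := by
        rw [← hn]
        exact (Set.ncard_pos (Set.toFinite _)).mpr ⟨e, heH⟩
      have := ih (n-1) (by omega) _ hc' hcard
      omega

lemma M1 [Fintype W] {H : SimpleGraph W} (hc : H.Connected) :
    Fintype.card W ≤ H.edgeSet.ncard + 1 := M1_aux _ H hc rfl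

lemma M2 [Fintype W] {H : SimpleGraph W} (hc : H.Connected)
    (h : Fintype.card W + 1 ≤ H.edgeSet.ncard) :
    ∃ (u : W) (c₁ : H.Walk u u) (v : W) (c₂ : H.Walk v v) (e : Sym2 W),
      c₁.IsCycle ∧ c₂.IsCycle ∧ e ∈ c₁.edges ∧ e ∉ c₂.edges := by
  classical
  have hac : ¬ H.IsAcyclic := by
    intro hac
    have := tree_count hc hac
    omega
  obtain ⟨u, c₁, hc₁⟩ := exists_cycle_of_not_acyclic hac
  obtain ⟨e, he⟩ := exists_edge_of_cycle hc₁
  have heH : e ∈ H.edgeSet := c₁.edges_subset_edgeSet he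
  set H' := H \ fromEdgeSet {e} with hH'
  have hc' : H'.Connected := connected_sdiff_of_cycle hc hc₁ he
  have hcard : H'.edgeSet.ncard = H.edgeSet.ncard - 1 := by
    rw [hH', edgeSet_sdiff_singleton, Set.ncard_diff_singleton_of_mem heH]
  have hac' : ¬ H'.IsAcyclic := by
    intro hac'
    have := tree_count hc' hac'
    have hfin : H.edgeSet.Finite := Set.toFinite _
    have : H.edgeSet.ncard ≥ 1 := (Set.ncard_pos hfin).mpr ⟨e, heH⟩
    omega
  obtain ⟨v, c₂', hc₂'⟩ := exists_cycle_of_not_acyclic hac'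
  have hle : H' ≤ H := sdiff_le
  let f : H' →g H := Hom.ofLE hle
  have hfinj : Function.Injective f := fun a b hab => hab
  refine ⟨u, c₁, v, c₂'.map f, e, hc₁, (Walk.map_isCycle_iff_of_injective hfinj).mpr hc₂', he, ?_⟩
  intro hmem
  rw [Walk.edges_map, List.mem_map] at hmem
  obtain ⟨d, hd, hde⟩ := hmem
  have hde' : d = e := by
    have hid : Sym2.map (⇑f) d = d := by
      induction d using Sym2.ind with
      | _ x y => rfl
    rwa [hid] at hde
  subst hde'
  have : d ∈ H'.edgeSet := c₂'.edges_subset_edgeSet hd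
  rw [hH', edgeSet_sdiff_singleton] at this
  exact this.2 rfl


lemma getLast?_cons_ne {α : Type*} {a : α} {l : List α} (h : l ≠ []) :
    (a :: l).getLast? = l.getLast? := by
  rcases l with _ | ⟨b, l'⟩
  · exact absurd rfl h
  · simp

variable {V : Type*} [Fintype V] [DecidableEq V] {G : SimpleGraph V}

lemma coe_edge_ncard (K : G.Subgraph) : K.coe.edgeSet.ncard = K.edgeSet.ncard := by
  rw [← K.image_coe_edgeSet_coe]
  exact (Set.ncard_image_of_injective _ (Sym2.map.injective Subtype.val_injective)).symm

lemma ball_excess {ℓ : ℕ} (hTF : G.TangleFree ℓ) (v₀ : V) (K : G.Subgraph) (hK : K.Connected)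
    (hball : ∀ x ∈ K.verts, G.dist v₀ x ≤ ℓ) :
    K.edgeSet.ncard ≤ K.verts.ncard ∧ K.verts.ncard ≤ K.edgeSet.ncard + 1 := by
  classical
  haveI : Fintype ↑K.verts := Set.Finite.fintype (Set.toFinite _)
  have hcoe : K.coe.Connected := hK
  have hvc : Fintype.card ↑K.verts = K.verts.ncard := by
    rw [Set.ncard_eq_toFinset_card', Set.toFinset_card]
  constructor
  · by_contra hcon
    push_neg at hcon
    have h2 : Fintype.card ↑K.verts + 1 ≤ K.coe.edgeSet.ncard := by
      rw [hvc, coe_edge_ncard]; omega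
    obtain ⟨u, c₁, v, c₂, e, hc₁, hc₂, he₁, he₂⟩ := M2 hcoe h2
    have hsup : ∀ (w : ↑K.verts) (c : K.coe.Walk w w), ∀ x ∈ (c.map K.hom).support,
        G.dist v₀ x ≤ ℓ := by
      intro w c x hx
      rw [Walk.support_map, List.mem_map] at hx
      obtain ⟨⟨y, hy⟩, _, rfl⟩ := hx
      exact hball y hy
    have hiff := hTF v₀ ↑u ↑v (c₁.map K.hom) (c₂.map K.hom)
      (hc₁.map Subgraph.hom_injective) (hc₂.map Subgraph.hom_injective)
      (hsup u c₁) (hsup v c₂) (Sym2.map Subtype.val e)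
    have hm₁ : Sym2.map Subtype.val e ∈ (c₁.map K.hom).edges := by
      rw [Walk.edges_map, List.mem_map]
      exact ⟨e, he₁, rfl⟩
    have hm₂ : Sym2.map Subtype.val e ∈ (c₂.map K.hom).edges := hiff.mp hm₁
    rw [Walk.edges_map, List.mem_map] at hm₂
    obtain ⟨d, hd, hde⟩ := hm₂
    have : d = e := Sym2.map.injective Subtype.val_injective hde
    exact he₂ (this ▸ hd)
  · have := M1 hcoe
    rwa [hvc, coe_edge_ncard] at this

lemma support_getLast? {u z : V} (w : G.Walk u z) : w.support.getLast? = some z := by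
  induction w with
  | nil => rfl
  | @cons a b c h p ih =>
    rw [Walk.support_cons, getLast?_cons_ne (Walk.support_ne_nil _)]
    exact ih

lemma edge_getLast? : ∀ {u z : V} (w : G.Walk u z) (f : Sym2 V),
    f ∈ w.edges → z ∈ f → z ∉ w.support.dropLast → w.edges.getLast? = some f := by
  intro u z w
  induction w with
  | nil => intro f hf _ _; simp at hf
  | @cons a b c h p ih =>
    intro f hf hz hocc
    rcases p with _ | ⟨hbc, q⟩
    · rw [Walk.edges_cons] at hf ⊢
      simp only [Walk.edges_nil, List.mem_singleton] at hf
      subst hf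
      rfl
    · rw [Walk.support_cons, List.dropLast_cons_of_ne_nil (Walk.support_ne_nil _)] at hocc
      simp only [List.mem_cons, not_or] at hocc
      rw [Walk.edges_cons] at hf
      have hfp : f ∈ (Walk.cons hbc q).edges := by
        rcases List.mem_cons.mp hf with hfe | hfp
        · exfalso
          subst hfe
          rcases Sym2.mem_iff.mp hz with rfl | rfl
          · exact hocc.1 rfl
          · apply hocc.2
            rw [Walk.support_cons, List.dropLast_cons_of_ne_nil (Walk.support_ne_nil _)]
            exact List.mem_cons_self
        · exact hfp
      have hres := ih f hfp hz hocc.2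
      rw [Walk.edges_cons, getLast?_cons_ne (by
        intro hnil
        rw [hnil] at hfp
        simp at hfp)]
      exact hres

lemma exists_penult : ∀ {u z : V} (w : G.Walk u z), ¬ w.Nil →
    ∃ y, G.Adj y z ∧ y ∈ w.support ∧ (w.support.Nodup → y ≠ z) := by
  intro u z w
  induction w with
  | nil => intro h; exact absurd Walk.nil_nil h
  | @cons a b c h p ih =>
    intro _
    rcases p with _ | ⟨hbc, q⟩
    · refine ⟨a, h, by simp, fun hnd => ?_⟩
      rw [Walk.support_cons, Walk.support_nil] at hnd
      simp only [List.nodup_cons, List.mem_singleton, List.nodup_nil, and_true] at hnd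
      exact hnd.1
    · obtain ⟨y, hadj, hmem, hne⟩ := ih (by simp)
      refine ⟨y, hadj, by rw [Walk.support_cons]; exact List.mem_cons_of_mem _ hmem,
        fun hnd => hne ?_⟩
      rw [Walk.support_cons] at hnd
      exact hnd.of_cons

lemma isCycle_reverse {a : V} {c : G.Walk a a} (hc : c.IsCycle) : c.reverse.IsCycle := by
  have h3 := hc.three_le_length
  rw [Walk.isCycle_def]
  refine ⟨Walk.IsTrail.reverse c hc.isTrail, ?_, ?_⟩
  · intro hnil
    exact hc.ne_nil (by rw [← Walk.reverse_reverse c, hnil, Walk.reverse_nil])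
  · have htne : c.support.tail ≠ [] := by
      intro h
      have h1 := Walk.length_support c
      rw [Walk.support_eq_cons c, h] at h1
      simp only [List.length_cons, List.length_nil] at h1
      omega
    have hgl : c.support.tail.getLast? = some a := by
      have := support_getLast? c
      rw [Walk.support_eq_cons c, getLast?_cons_ne htne] at this
      exact this
    have hga : c.support.tail.getLast htne = a := by
      rw [List.getLast?_eq_getLast htne] at hgl
      exact Option.some.inj hgl
    have hdecomp : c.support.tail.dropLast ++ [a] = c.support.tail := by
      have h' := List.dropLast_append_getLast htne
      rw [hga] at h'
      exact h'
    have hnd := hc.support_nodup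
    rw [← hdecomp] at hnd
    have hdnd : c.support.tail.dropLast.Nodup := (List.nodup_append.mp hnd).1
    have hdisj : a ∉ c.support.tail.dropLast := fun hmem =>
      (List.disjoint_of_nodup_append hnd) hmem (List.mem_singleton_self _)
    rw [Walk.support_reverse, Walk.support_eq_cons c, ← hdecomp]
    have : ((a :: (c.support.tail.dropLast ++ [a])).reverse).tail
        = c.support.tail.dropLast.reverse ++ [a] := by
      simp
    rw [this]
    rw [← List.nodup_reverse]
    simp only [List.reverse_append, List.reverse_reverse, List.reverse_cons, List.reverse_nil,
      List.nil_append, List.singleton_append]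
    exact List.nodup_cons.mpr ⟨hdisj, hdnd⟩

lemma not_mem_dropLast_of_nodup {l : List V} {a : V} (hnd : l.Nodup) (hne : l ≠ [])
    (hgl : l.getLast? = some a) : a ∉ l.dropLast := by
  intro hmem
  have hga : l.getLast hne = a := by
    rw [List.getLast?_eq_getLast hne] at hgl
    exact Option.some.inj hgl
  have hdec : l.dropLast ++ [a] = l := by
    rw [← hga]; exact List.dropLast_append_getLast hne
  rw [← hdec] at hnd
  exact (List.disjoint_of_nodup_append hnd) hmem (List.mem_singleton_self _)

lemma cycle_first_edge {a : V} {e : Sym2 V}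
    (h : ∃ (u : V) (c : G.Walk u u), c.IsCycle ∧ e ∈ c.edges) (ha : a ∈ e) :
    ∃ (b : V) (hab : G.Adj a b) (q : G.Walk b a), (Walk.cons hab q).IsCycle ∧ e = s(a, b) := by
  classical
  obtain ⟨u, c, hc, he⟩ := h
  obtain ⟨b₀, rfl⟩ := Sym2.mem_iff_exists.mp ha
  have hsup : a ∈ c.support := c.fst_mem_support_of_mem_edges he
  have hc₁ : (c.rotate a hsup).IsCycle := hc.rotate hsup
  have he₁ : s(a, b₀) ∈ (c.rotate a hsup).edges := (Walk.rotate_edges c a hsup).mem_iff.mpr he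
  set c₁ := c.rotate a hsup with hc₁def
  clear_value c₁
  have key : ∃ c₂ : G.Walk a a, c₂.IsCycle ∧ c₂.edges.head? = some s(a, b₀) := by
    rcases c₁ with _ | ⟨h1, q1⟩
    · exact absurd hc₁ Walk.IsCycle.not_of_nil
    · rename_i u₁ h1 q1
      rw [Walk.edges_cons] at he₁
      rcases List.mem_cons.mp he₁ with hfe | hfq
      · exact ⟨Walk.cons h1 q1, hc₁, by rw [Walk.edges_cons, hfe]; rfl⟩
      · have hnd : q1.support.Nodup := by
          have := hc₁.support_nodup
          rwa [Walk.support_cons, List.tail_cons] at this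
        have hocc : a ∉ q1.support.dropLast :=
          not_mem_dropLast_of_nodup hnd (Walk.support_ne_nil _) (support_getLast? q1)
        have hlast := edge_getLast? q1 s(a, b₀) hfq (by simp) hocc
        refine ⟨(Walk.cons h1 q1).reverse, isCycle_reverse hc₁, ?_⟩
        rw [Walk.edges_reverse, List.head?_reverse, Walk.edges_cons,
          getLast?_cons_ne (by rintro h'; rw [h'] at hfq; simp at hfq)]
        exact hlast
  obtain ⟨c₂, hcyc₂, hhead⟩ := key
  cases c₂ with
  | nil => simp at hhead
  | cons hab q =>
    rw [Walk.edges_cons] at hhead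
    simp only [List.head?_cons, Option.some.injEq] at hhead
    exact ⟨_, hab, q, hcyc₂, hhead.symm⟩

open Classical in
noncomputable def nv (A : Set V) {u z : V} (w : G.Walk u z) : ℕ :=
  w.support.tail.countP (fun x => decide (x ∉ A))

open Classical in
noncomputable def ne' (E' : Set (Sym2 V)) {u z : V} (w : G.Walk u z) : ℕ :=
  w.edges.countP (fun f => decide (f ∉ E'))

open Classical in
lemma nv_cons {A : Set V} {u b z : V} (h : G.Adj u b) (p : G.Walk b z) :
    nv A (Walk.cons h p) = nv A p + (if b ∈ A then 0 else 1) := by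
  unfold nv
  rw [Walk.support_cons, List.tail_cons, Walk.support_eq_cons p, List.countP_cons]
  by_cases hb : b ∈ A <;> simp [hb]

open Classical in
lemma ne'_cons {E' : Set (Sym2 V)} {u b z : V} (h : G.Adj u b) (p : G.Walk b z) :
    ne' E' (Walk.cons h p) = ne' E' p + (if s(u, b) ∈ E' then 0 else 1) := by
  unfold ne'
  rw [Walk.edges_cons, List.countP_cons]
  by_cases hb : s(u, b) ∈ E' <;> simp [hb]

lemma ne'_le_length (E' : Set (Sym2 V)) {u z : V} (w : G.Walk u z) : ne' E' w ≤ w.length := by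
  unfold ne'
  calc _ ≤ w.edges.length := List.countP_le_length
  _ = w.length := w.length_edges

lemma S1 {A : Set V} {E' : Set (Sym2 V)} (hcl : ∀ f ∈ E', ∀ x ∈ f, x ∈ A) :
    ∀ {u z : V} (w : G.Walk u z), nv A w ≤ ne' E' w := by
  intro u z w
  induction w with
  | nil => simp [nv, ne']
  | @cons a b c h p ih =>
    rw [nv_cons, ne'_cons]
    by_cases hb : b ∈ A
    · simp only [hb, if_true]
      omega
    · have he : s(a, b) ∉ E' := fun hmem => hb (hcl _ hmem b (Sym2.mem_mk_right a b))
      simp only [hb, he, if_false]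
      omega

lemma S2' {A : Set V} {E' : Set (Sym2 V)} (hcl : ∀ f ∈ E', ∀ x ∈ f, x ∈ A) :
    ∀ {u z : V} (w : G.Walk u z), u ∉ A → z ∈ A → nv A w + 1 ≤ ne' E' w := by
  intro u z w
  induction w with
  | nil => intro hu hz; exact absurd hz hu
  | @cons a b c h p ih =>
    intro hu hz
    have he : s(a, b) ∉ E' := fun hmem => hu (hcl _ hmem a (Sym2.mem_mk_left a b))
    rw [nv_cons, ne'_cons]
    simp only [he, if_false]
    by_cases hb : b ∈ A
    · have := S1 hcl p
      simp only [hb, if_true]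
      omega
    · have := ih hb hz
      simp only [hb, if_false]
      omega

lemma S2 {A : Set V} {E' : Set (Sym2 V)} (hcl : ∀ f ∈ E', ∀ x ∈ f, x ∈ A)
    {u b z : V} (h : G.Adj u b) (p : G.Walk b z) (hz : z ∈ A) (he : s(u, b) ∉ E') :
    nv A (Walk.cons h p) + 1 ≤ ne' E' (Walk.cons h p) := by
  rw [nv_cons, ne'_cons]
  simp only [he, if_false]
  by_cases hb : b ∈ A
  · have := S1 hcl p
    simp only [hb, if_true]
    omega
  · have := S2' hcl p hb hz
    simp only [hb, if_false]
    omega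

lemma S3' {A : Set V} {E' : Set (Sym2 V)} (hcl : ∀ f ∈ E', ∀ x ∈ f, x ∈ A) :
    ∀ {u z : V} (w : G.Walk u z), u ∉ A →
      (nv A w + 1 ≤ ne' E' w) ∨ (ne' E' w = w.length) := by
  intro u z w
  induction w with
  | nil => intro _; right; simp [ne']
  | @cons a b c h p ih =>
    intro hu
    have he : s(a, b) ∉ E' := fun hmem => hu (hcl _ hmem a (Sym2.mem_mk_left a b))
    rw [nv_cons, ne'_cons]
    simp only [he, if_false]
    by_cases hb : b ∈ A
    · left
      have := S1 hcl p
      simp only [hb, if_true]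
      omega
    · rcases ih hb with hl | hr
      · left; simp only [hb, if_false]; omega
      · right; rw [hr, Walk.length_cons]

lemma S3 {A : Set V} {E' : Set (Sym2 V)} (hcl : ∀ f ∈ E', ∀ x ∈ f, x ∈ A)
    {u b z : V} (h : G.Adj u b) (p : G.Walk b z) (he : s(u, b) ∉ E') :
    (nv A (Walk.cons h p) + 1 ≤ ne' E' (Walk.cons h p)) ∨
      (ne' E' (Walk.cons h p) = (Walk.cons h p).length) := by
  rw [nv_cons, ne'_cons]
  simp only [he, if_false]
  by_cases hb : b ∈ A
  · left
    have := S1 hcl p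
    simp only [hb, if_true]
    omega
  · rcases S3' hcl p hb with hl | hr
    · left; simp only [hb, if_false]; omega
    · right; rw [hr, Walk.length_cons]

-- set conversions
open Classical in
lemma ncard_newE_eq {E' : Set (Sym2 V)} {u z : V} (w : G.Walk u z) (hnd : w.edges.Nodup) :
    ({f | f ∈ w.edges} \ E').ncard = ne' E' w := by
  classical
  have hset : {f | f ∈ w.edges} \ E' = ↑(w.edges.filter (fun f => decide (f ∉ E'))).toFinset := by
    ext f
    simp [List.mem_filter, Set.mem_diff]
  rw [hset, Set.ncard_coe_finset, List.toFinset_card_of_nodup (hnd.filter _),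
    ← List.countP_eq_length_filter]
  rfl

open Classical in
lemma ncard_newV_le {A : Set V} {u z : V} (w : G.Walk u z) (hu : u ∈ A) :
    ({x | x ∈ w.support} \ A).ncard ≤ nv A w := by
  classical
  have hsub : {x | x ∈ w.support} \ A ⊆
      ↑(w.support.tail.filter (fun x => decide (x ∉ A))).toFinset := by
    intro x hx
    obtain ⟨hmem, hnA⟩ := hx
    rw [Walk.support_eq_cons w] at hmem
    rcases List.mem_cons.mp hmem with rfl | htail
    · exact absurd hu hnA
    · simp only [List.coe_toFinset, Set.mem_setOf_eq, List.mem_filter]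
      exact ⟨htail, by simpa using hnA⟩
  calc ({x | x ∈ w.support} \ A).ncard
      ≤ _ := Set.ncard_le_ncard hsub (Set.toFinite _)
    _ = (w.support.tail.filter (fun x => decide (x ∉ A))).toFinset.card := Set.ncard_coe_finset _
    _ ≤ (w.support.tail.filter (fun x => decide (x ∉ A))).length := List.toFinset_card_le _
    _ = nv A w := by rw [← List.countP_eq_length_filter]; rfl


lemma prefix_eq_of_getLast {α : Type*} {l p₁ p₂ : List α} {z : α} (hl : l.Nodup)
    (h1 : p₁ <+: l) (h2 : p₂ <+: l) (hz1 : p₁.getLast? = some z) (hz2 : p₂.getLast? = some z) :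
    p₁ = p₂ := by
  have key : ∀ {q₁ q₂ : List α}, q₁ <+: l → q₂ <+: l → q₁.getLast? = some z →
      q₂.getLast? = some z → q₁ <+: q₂ → q₁ = q₂ := by
    intro q₁ q₂ hq₁ hq₂ hgz₁ hgz₂ hpre
    obtain ⟨r, rfl⟩ := hpre
    rcases r with _ | ⟨c, r'⟩
    · simp
    · exfalso
      have hnd : (q₁ ++ c :: r').Nodup := hq₂.sublist.nodup hl
      have hzq₁ : z ∈ q₁ := by
        rcases q₁ with _ | _
        · simp at hgz₁
        · exact List.mem_of_mem_getLast? (by rw [hgz₁]; rfl)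
      have hzr : z ∈ c :: r' := by
        have : (q₁ ++ c :: r').getLast? = (c :: r').getLast? := by
          rcases q₁ with _ | ⟨d, q'⟩
          · simp
          · rw [List.getLast?_append_of_ne_nil _ (by simp)]
        rw [this] at hgz₂
        exact List.mem_of_mem_getLast? (by rw [hgz₂]; rfl)
      exact (List.disjoint_of_nodup_append hnd) hzq₁ hzr
  rcases List.prefix_or_prefix_of_prefix h1 h2 with h | h
  · exact key h1 h2 hz1 hz2 h
  · exact (key h2 h1 hz2 hz1 h).symm

open Classical in
lemma step {ℓ : ℕ} (hG : G.Connected) {G' : G.Subgraph} {v₀ : V}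
    (hd : ∀ a ∈ G'.verts, 3 * G.dist v₀ a + 2 ≤ ℓ)
    {e : Sym2 V} (hcyc : ∃ u, ∃ c : G.Walk u u, c.IsCycle ∧ e ∈ c.edges)
    {a : V} (ha : a ∈ G'.verts) (hae : a ∈ e) :
    ∃ (z : V) (Wk : G.Walk a z),
      Wk.edges.Nodup ∧
      e ∈ Wk.edges ∧
      (∃ (b : V) (hab : G.Adj a b) (t : G.Walk b z), Wk = Walk.cons hab t ∧ e = s(a, b)) ∧
      (∀ x ∈ Wk.support, G.dist v₀ x ≤ ℓ) ∧
      (∀ f ∈ Wk.edges, ∀ x ∈ f, x ∈ G'.verts →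
        f = e ∨ (Wk.edges.getLast? = some f ∧ z ∈ G'.verts)) ∧
      (z ∉ G'.verts → 2 * ℓ ≤ 3 * Wk.length) := by
  classical
  obtain ⟨b, hab, q, hcycW, he⟩ := cycle_first_edge hcyc hae
  have hda : 3 * G.dist v₀ a + 2 ≤ ℓ := hd a ha
  -- predicate
  set Q : V → Prop := fun x => x ∈ G'.verts ∨ ℓ ≤ G.dist v₀ x with hQ
  set p : V → Bool := fun x => decide (Q x) with hp
  set l : List V := q.support with hls
  have hQa : Q a := Or.inl ha
  have hfind_some : (l.find? p).isSome := List.find?_isSome.mpr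
    ⟨a, by rw [hls]; exact q.end_mem_support, by simp [hp, hQa]⟩
  obtain ⟨z, hfind⟩ := Option.isSome_iff_exists.mp hfind_some
  have hQz : Q z := by have := List.find?_some hfind; rwa [hp, decide_eq_true_eq] at this
  have hz_mem : z ∈ q.support := by rw [← hls]; exact List.mem_of_find?_eq_some hfind
  obtain ⟨hpz, l₁, l₂, hldec, hl₁⟩ := List.find?_eq_some_iff_append.mp hfind
  have hl₁' : ∀ x ∈ l₁, ¬ Q x := by
    intro x hx
    have := hl₁ x hx
    rw [hp, Bool.not_eq_true', decide_eq_false_iff_not] at this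
    exact this
  -- nodup facts
  have hqnd : q.support.Nodup := by
    have := hcycW.support_nodup
    rwa [Walk.support_cons, List.tail_cons] at this
  have hend : (Walk.cons hab q).edges.Nodup := hcycW.isTrail.edges_nodup
  rw [Walk.edges_cons] at hend
  have hqe_nd : q.edges.Nodup := (List.nodup_cons.mp hend).2
  have he_notin_q : s(a, b) ∉ q.edges := (List.nodup_cons.mp hend).1
  -- the truncated walk
  set t : G.Walk b z := q.takeUntil z hz_mem with ht
  have hts_pre : t.support <+: q.support :=
    ⟨(q.dropUntil z hz_mem).support.tail, by rw [← Walk.support_append, Walk.take_spec]⟩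
  have hte_pre : t.edges <+: q.edges :=
    ⟨(q.dropUntil z hz_mem).edges, by rw [← Walk.edges_append, Walk.take_spec]⟩
  have hts_nd : t.support.Nodup := hts_pre.sublist.nodup hqnd
  have hte_nd : t.edges.Nodup := hte_pre.sublist.nodup hqe_nd
  have he_notin_t : s(a, b) ∉ t.edges := fun h => he_notin_q (hte_pre.sublist.mem h)
  -- t.support = l₁ ++ [z]
  have hts_eq : t.support = l₁ ++ [z] := by
    refine prefix_eq_of_getLast (l := q.support) hqnd hts_pre ?_ (support_getLast? t) (by simp)
    rw [hls] at hldec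
    exact ⟨l₂, by rw [hldec]; simp⟩
  have hint : ∀ x ∈ t.support, x ≠ z → ¬ Q x := by
    intro x hx hxz
    rw [hts_eq] at hx
    rcases List.mem_append.mp hx with h | h
    · exact hl₁' x h
    · simp at h; exact absurd h hxz
  have hz_not_dropLast : z ∉ t.support.dropLast := by
    rw [hts_eq, List.dropLast_concat]
    intro hmem
    exact (hl₁' z hmem) hQz
  set Wk : G.Walk a z := Walk.cons hab t with hWk
  have hWedges : Wk.edges = s(a, b) :: t.edges := Walk.edges_cons _ _
  have hWnd : Wk.edges.Nodup := by rw [hWedges]; exact List.nodup_cons.mpr ⟨he_notin_t, hte_nd⟩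
  have heW : e ∈ Wk.edges := by rw [hWedges, he]; exact List.mem_cons_self
  -- distance bounds
  have hd_le : ∀ y, G.Adj y z → G.dist v₀ y + 1 ≥ G.dist v₀ z := by
    intro y hyz
    have h1 : G.dist y z ≤ 1 := by
      have := SimpleGraph.dist_le (Walk.cons hyz Walk.nil)
      simpa using this
    have := hG.dist_triangle (u := v₀) (v := y) (w := z)
    omega
  have hdist_z : G.dist v₀ z ≤ ℓ := by
    rcases hQz with hzG | hzd
    · have := hd z hzG; omega
    · -- z ∉ G'.verts is not known; but use penult
      by_cases hza : z = a
      · subst hza; omega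
      · have hWnotnil : ¬ Wk.Nil := by rw [hWk]; simp
        have hWs_nd : Wk.support.Nodup := by
          rw [hWk, Walk.support_cons]
          refine List.nodup_cons.mpr ⟨?_, hts_nd⟩
          intro hmem
          rcases List.mem_append.mp (hts_eq ▸ hmem) with h | h
          · exact (hl₁' a h) hQa
          · simp at h; exact hza h.symm
        obtain ⟨y, hyz, hymem, hyne⟩ := exists_penult Wk hWnotnil
        have hyne' : y ≠ z := hyne hWs_nd
        have hy_bound : G.dist v₀ y + 1 ≤ ℓ + 1 := by
          rcases List.mem_cons.mp (by rw [hWk, Walk.support_cons] at hymem; exact hymem) with rfl | hyt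
          · omega
          · have := hint y hyt hyne'
            rw [hQ] at this
            push_neg at this
            omega
        have := hd_le y hyz
        -- need: dist v₀ y ≤ ℓ - 1 when y interior; redo carefully below
        rcases List.mem_cons.mp (by rw [hWk, Walk.support_cons] at hymem; exact hymem) with rfl | hyt
        · have := hd_le y hyz; omega
        · have hnq := hint y hyt hyne'
          rw [hQ] at hnq
          push_neg at hnq
          have := hd_le y hyz
          omega
  have hsupp : ∀ x ∈ Wk.support, G.dist v₀ x ≤ ℓ := by
    intro x hx
    rw [hWk, Walk.support_cons] at hx
    rcases List.mem_cons.mp hx with rfl | hxt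
    · omega
    · by_cases hxz : x = z
      · subst hxz; exact hdist_z
      · have := hint x hxt hxz
        rw [hQ] at this
        push_neg at this
        omega
  -- edge characterization
  have hedgechar : ∀ f ∈ Wk.edges, ∀ x ∈ f, x ∈ G'.verts →
      f = e ∨ (Wk.edges.getLast? = some f ∧ z ∈ G'.verts) := by
    intro f hf x hxf hxG
    rw [hWedges] at hf
    rcases List.mem_cons.mp hf with rfl | hft
    · left; exact he.symm
    · right
      obtain ⟨x', hfx'⟩ := Sym2.mem_iff_exists.mp hxf
      have hx_sup : x ∈ t.support := by
        rw [hfx'] at hft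
        exact t.fst_mem_support_of_mem_edges hft
      have hxz : x = z := by
        by_contra hne
        exact (hint x hx_sup hne) (Or.inl hxG)
      subst hxz
      refine ⟨?_, hxG⟩
      have := edge_getLast? t f hft hxf hz_not_dropLast
      rw [hWedges, getLast?_cons_ne (fun hnil => by rw [hnil] at hft; simp at hft)]
      exact this
  -- length bound
  have hlen : z ∉ G'.verts → 2 * ℓ ≤ 3 * Wk.length := by
    intro hzG
    have hzd : ℓ ≤ G.dist v₀ z := by
      rcases hQz with h | h
      · exact absurd h hzG
      · exact h
    have h1 : G.dist a z ≤ Wk.length := SimpleGraph.dist_le Wk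
    have h2 := hG.dist_triangle (u := v₀) (v := a) (w := z)
    omega
  exact ⟨z, Wk, hWnd, heW, ⟨b, hab, t, rfl, he⟩, hsupp, hedgechar, hlen⟩


lemma main_induction {ℓ : ℕ} (hG : G.Connected) {G' : G.Subgraph} {v₀ : V}
    (hG'conn : G'.Connected)
    (hd : ∀ a ∈ G'.verts, 3 * G.dist v₀ a + 2 ≤ ℓ)
    (hballG' : ∀ x ∈ G'.verts, G.dist v₀ x ≤ ℓ) :
    ∀ L : List (Sym2 V), L.Nodup →
    (∀ e ∈ L, (∃ u, ∃ c : G.Walk u u, c.IsCycle ∧ e ∈ c.edges) ∧ e ∉ G'.edgeSet ∧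
       ∃ x ∈ G'.verts, x ∈ e) →
    ∃ (P : G.Subgraph) (Λ Abs : Finset (Sym2 V)) (nB nAδ nA0 : ℕ),
      G' ≤ P ∧ P.Connected ∧ (∀ x ∈ P.verts, G.dist v₀ x ≤ ℓ) ∧
      (∀ f ∈ P.edgeSet, (∃ x ∈ f, x ∈ G'.verts) → f ∈ G'.edgeSet ∨ f ∈ L ∨ f ∈ Λ) ∧
      Abs ⊆ Λ ∧ (∀ f ∈ Abs, f ∈ L) ∧
      L.length ≤ Abs.card + nB + nAδ + nA0 ∧
      Λ.card ≤ nB ∧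
      G'.edgeSet.ncard + P.verts.ncard + nB + nAδ ≤ P.edgeSet.ncard + G'.verts.ncard ∧
      3 * G'.edgeSet.ncard + nA0 * (2 * ℓ) ≤ 3 * P.edgeSet.ncard := by
  intro L
  induction L with
  | nil =>
    intro _ _
    exact ⟨G', ∅, ∅, 0, 0, 0, le_refl _, hG'conn, hballG',
      fun f hf _ => Or.inl hf, Finset.Subset.refl _, by simp, by simp, by simp, by omega, by omega⟩
  | cons e L' ih =>
    intro hnd hmem
    have heL' : e ∉ L' := (List.nodup_cons.mp hnd).1
    obtain ⟨P, Λ, Abs, nB, nAδ, nA0, hGP, hPconn, hPball, hI1, hAbsΛ, hAbsL, hC1, hC2, hC3, hC4⟩ :=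
      ih (List.nodup_cons.mp hnd).2 (fun f hf => hmem f (List.mem_cons_of_mem _ hf))
    obtain ⟨hcyc, heG', x₀, hx₀G, hx₀e⟩ := hmem e List.mem_cons_self
    by_cases hePE : e ∈ P.edgeSet
    · -- absorbed
      have heΛ : e ∈ Λ := by
        rcases hI1 e hePE ⟨x₀, hx₀e, hx₀G⟩ with h | h | h
        · exact absurd h heG'
        · exact absurd h heL'
        · exact h
      have heAbs : e ∉ Abs := fun h => heL' (hAbsL e h)
      refine ⟨P, Λ, insert e Abs, nB, nAδ, nA0, hGP, hPconn, hPball, ?_,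
        Finset.insert_subset heΛ hAbsΛ, ?_, ?_, hC2, hC3, hC4⟩
      · intro f hf hinc
        rcases hI1 f hf hinc with h | h | h
        · exact Or.inl h
        · exact Or.inr (Or.inl (List.mem_cons_of_mem _ h))
        · exact Or.inr (Or.inr h)
      · intro f hf
        rcases Finset.mem_insert.mp hf with rfl | h
        · exact List.mem_cons_self
        · exact List.mem_cons_of_mem _ (hAbsL f h)
      · rw [List.length_cons, Finset.card_insert_of_notMem heAbs]
        omega
    · -- new walk
      obtain ⟨z, Wk, hWnd, heW, ⟨b, hab, t, hWkeq, heq⟩, hWsupp, hWchar, hWlen⟩ :=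
        step hG hd hcyc hx₀G hx₀e
      subst hWkeq
      set a := x₀
      have hcl : ∀ f ∈ P.edgeSet, ∀ x ∈ f, x ∈ P.verts :=
        fun f hf x hx => P.mem_verts_of_mem_edge hf hx
      have haP : a ∈ P.verts := hGP.1 hx₀G
      have hfirst : s(a, b) ∉ P.edgeSet := by rw [← heq]; exact hePE
      set Wk : G.Walk a z := Walk.cons hab t with hWk
      set P' : G.Subgraph := P ⊔ Wk.toSubgraph with hP'
      have hG'P' : G' ≤ P' := le_trans hGP le_sup_left
      have hP'conn : P'.Connected := by
        refine Subgraph.connected_sup hPconn.preconnected Wk.toSubgraph_connected.preconnected ⟨a, ?_⟩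
        rw [Subgraph.verts_inf]
        exact ⟨haP, Wk.start_mem_verts_toSubgraph⟩
      have hP'ball : ∀ x ∈ P'.verts, G.dist v₀ x ≤ ℓ := by
        intro x hx
        rw [hP', Subgraph.verts_sup] at hx
        rcases hx with h | h
        · exact hPball x h
        · exact hWsupp x ((Wk.mem_verts_toSubgraph).mp h)
      have hEeq : P'.edgeSet.ncard = P.edgeSet.ncard + ne' P.edgeSet Wk := by
        rw [hP', Subgraph.edgeSet_sup, Walk.edgeSet_toSubgraph]
        rw [← Set.union_diff_self, Set.ncard_union_eq (Set.disjoint_sdiff_right)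
          (Set.toFinite _) (Set.toFinite _)]; exact congrArg (P.edgeSet.ncard + ·) (ncard_newE_eq Wk hWnd)
      have hVle : P'.verts.ncard ≤ P.verts.ncard + nv P.verts Wk := by
        rw [hP', Subgraph.verts_sup, Walk.verts_toSubgraph]
        rw [← Set.union_diff_self, Set.ncard_union_eq (Set.disjoint_sdiff_right)
          (Set.toFinite _) (Set.toFinite _)]
        have := ncard_newV_le Wk haP
        omega
      have hI1' : ∀ f ∈ P'.edgeSet, (∃ x ∈ f, x ∈ G'.verts) →
          f ∈ G'.edgeSet ∨ f ∈ (e :: L') ∨ f ∈ Λ ∨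
            (Wk.edges.getLast? = some f ∧ z ∈ G'.verts) := by
        intro f hf hinc
        rw [hP', Subgraph.edgeSet_sup] at hf
        rcases hf with h | h
        · rcases hI1 f h hinc with h' | h' | h'
          · exact Or.inl h'
          · exact Or.inr (Or.inl (List.mem_cons_of_mem _ h'))
          · exact Or.inr (Or.inr (Or.inl h'))
        · rw [Walk.edgeSet_toSubgraph] at h
          obtain ⟨x, hxf, hxG⟩ := hinc
          rcases hWchar f h x hxf hxG with rfl | h'
          · exact Or.inr (Or.inl List.mem_cons_self)
          · exact Or.inr (Or.inr (Or.inr h'))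
      have hEsub : P.edgeSet.ncard ≤ P'.edgeSet.ncard := by omega
      by_cases hzG : z ∈ G'.verts
      · -- B type
        have hzP : z ∈ P.verts := hGP.1 hzG
        have hdelta : nv P.verts Wk + 1 ≤ ne' P.edgeSet Wk := S2 hcl hab t hzP hfirst
        obtain ⟨flast, hflast⟩ : ∃ flast, Wk.edges.getLast? = some flast := by
          rcases h : Wk.edges.getLast? with _ | f
          · rw [List.getLast?_eq_none_iff] at h
            rw [h] at heW
            simp at heW
          · exact ⟨f, rfl⟩
        refine ⟨P', insert flast Λ, Abs, nB + 1, nAδ, nA0, hG'P', hP'conn, hP'ball, ?_,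
          hAbsΛ.trans (Finset.subset_insert _ _), ?_, ?_, ?_, ?_, ?_⟩
        · intro f hf hinc
          rcases hI1' f hf hinc with h | h | h | h
          · exact Or.inl h
          · exact Or.inr (Or.inl h)
          · exact Or.inr (Or.inr (Finset.mem_insert_of_mem h))
          · rw [hflast] at h
            have : f = flast := (Option.some.inj h.1).symm
            exact Or.inr (Or.inr (this ▸ Finset.mem_insert_self _ _))
        · exact fun f hf => List.mem_cons_of_mem _ (hAbsL f hf)
        · rw [List.length_cons]; omega
        · calc (insert flast Λ).card ≤ Λ.card + 1 := Finset.card_insert_le _ _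
            _ ≤ nB + 1 := by omega
        · omega
        · omega
      · by_cases hzP : z ∈ P.verts
        · -- Aδ type
          have hdelta : nv P.verts Wk + 1 ≤ ne' P.edgeSet Wk := S2 hcl hab t hzP hfirst
          refine ⟨P', Λ, Abs, nB, nAδ + 1, nA0, hG'P', hP'conn, hP'ball, ?_,
            hAbsΛ, fun f hf => List.mem_cons_of_mem _ (hAbsL f hf), ?_, hC2, ?_, ?_⟩
          · intro f hf hinc
            rcases hI1' f hf hinc with h | h | h | h
            · exact Or.inl h
            · exact Or.inr (Or.inl h)
            · exact Or.inr (Or.inr h)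
            · exact absurd h.2 hzG
          · rw [List.length_cons]; omega
          · omega
          · omega
        · -- A type: dichotomy
          have hS3 : (nv P.verts Wk + 1 ≤ ne' P.edgeSet Wk) ∨ (ne' P.edgeSet Wk = Wk.length) :=
            S3 hcl hab t hfirst
          rcases hS3 with hdelta | hfull
          · refine ⟨P', Λ, Abs, nB, nAδ + 1, nA0, hG'P', hP'conn, hP'ball, ?_,
              hAbsΛ, fun f hf => List.mem_cons_of_mem _ (hAbsL f hf), ?_, hC2, ?_, ?_⟩
            · intro f hf hinc
              rcases hI1' f hf hinc with h | h | h | h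
              · exact Or.inl h
              · exact Or.inr (Or.inl h)
              · exact Or.inr (Or.inr h)
              · exact absurd h.2 hzG
            · rw [List.length_cons]; omega
            · omega
            · omega
          · -- A0
            have hlen := hWlen hzG
            have hS1 := S1 hcl Wk
            refine ⟨P', Λ, Abs, nB, nAδ, nA0 + 1, hG'P', hP'conn, hP'ball, ?_,
              hAbsΛ, fun f hf => List.mem_cons_of_mem _ (hAbsL f hf), ?_, hC2, ?_, ?_⟩
            · intro f hf hinc
              rcases hI1' f hf hinc with h | h | h | h
              · exact Or.inl h
              · exact Or.inr (Or.inl h)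
              · exact Or.inr (Or.inr h)
              · exact absurd h.2 hzG
            · rw [List.length_cons]; omega
            · omega
            · have : 2 * ℓ ≤ 3 * ne' P.edgeSet Wk := by rw [hfull]; exact hlen
              calc 3 * G'.edgeSet.ncard + (nA0 + 1) * (2 * ℓ)
                  = 3 * G'.edgeSet.ncard + nA0 * (2 * ℓ) + 2 * ℓ := by ring
                _ ≤ 3 * P.edgeSet.ncard + 3 * ne' P.edgeSet Wk := by omega
                _ = 3 * P'.edgeSet.ncard := by rw [hEeq]; ring

end StmtTwo

open StmtTwo in
theorem stmt_2 {V : Type*} [Fintype V] [DecidableEq V] (G : SimpleGraph V)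
    [DecidableRel G.Adj] (ℓ : ℕ) (hℓ : 5 ≤ ℓ)
    (hG : G.Connected) (hTF : G.TangleFree ℓ)
    (G' : G.Subgraph) (hG'conn : G'.Connected)
    (hdiam : ∀ x y : G'.verts, (G'.coe.dist x y : ℝ) ≤ ((ℓ : ℝ) - 2) / 3) :
    (({e | G.IsCycleEdge e ∧ e ∉ G'.edgeSet ∧ ∃ v ∈ G'.verts, v ∈ e}).ncard : ℝ)
      ≤ 6 + 16 * G.edgeFinset.card / ℓ := by
  classical
  -- base vertex
  obtain ⟨v₀, hv₀⟩ : G'.verts.Nonempty := (Subgraph.connected_iff.mp hG'conn).2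
  -- distance bound from diameter hypothesis
  have hdistG : ∀ a (ha : a ∈ G'.verts), G.dist v₀ a ≤ G'.coe.dist ⟨v₀, hv₀⟩ ⟨a, ha⟩ := by
    intro a ha
    have hcoe : G'.coe.Connected := hG'conn
    obtain ⟨w, hw⟩ := hcoe.exists_walk_length_eq_dist ⟨v₀, hv₀⟩ ⟨a, ha⟩
    calc G.dist v₀ a ≤ (w.map G'.hom).length := SimpleGraph.dist_le _
      _ = w.length := Walk.length_map _ _
      _ = _ := hw
  have hd : ∀ a ∈ G'.verts, 3 * G.dist v₀ a + 2 ≤ ℓ := by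
    intro a ha
    have h1 := hdiam ⟨v₀, hv₀⟩ ⟨a, ha⟩
    have h2 : (G.dist v₀ a : ℝ) ≤ ((ℓ : ℝ) - 2) / 3 := by
      refine le_trans ?_ h1
      exact_mod_cast hdistG a ha
    have h3 : (3 * G.dist v₀ a + 2 : ℝ) ≤ (ℓ : ℝ) := by linarith
    exact_mod_cast h3
  have hballG' : ∀ x ∈ G'.verts, G.dist v₀ x ≤ ℓ := fun x hx => by have := hd x hx; omega
  -- the set S as a list
  set S : Set (Sym2 V) := {e | G.IsCycleEdge e ∧ e ∉ G'.edgeSet ∧ ∃ v ∈ G'.verts, v ∈ e}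
    with hSdef
  have hSfin : S.Finite := Set.toFinite _
  set L : List (Sym2 V) := hSfin.toFinset.toList with hLdef
  have hLnd : L.Nodup := Finset.nodup_toList _
  have hLlen : L.length = S.ncard := by
    rw [hLdef, Finset.length_toList, Set.ncard_eq_toFinset_card _ hSfin]
  have hLmem : ∀ e ∈ L, (∃ u, ∃ c : G.Walk u u, c.IsCycle ∧ e ∈ c.edges) ∧ e ∉ G'.edgeSet ∧
      ∃ x ∈ G'.verts, x ∈ e := by
    intro e he
    rw [hLdef, Finset.mem_toList, Set.Finite.mem_toFinset] at he
    exact he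
  obtain ⟨P, Λ, Abs, nB, nAδ, nA0, hGP, hPconn, hPball, hI1, hAbsΛ, hAbsL, hC1, hC2, hC3, hC4⟩ :=
    main_induction hG hG'conn hd hballG' L hLnd hLmem
  -- master bounds
  have hPmaster := ball_excess hTF v₀ P hPconn hPball
  have hG'master := ball_excess hTF v₀ G' hG'conn hballG'
  have hEPG : P.edgeSet.ncard ≤ G.edgeFinset.card := by
    have hsub : P.edgeSet ⊆ G.edgeSet := P.edgeSet_subset
    have h := Set.ncard_le_ncard hsub (Set.toFinite _)
    have h2 : G.edgeSet.ncard = G.edgeFinset.card := by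
      rw [← coe_edgeFinset, Set.ncard_coe_finset]
    omega
  have hδ : nB + nAδ ≤ 1 := by
    have h1 := hPmaster.1
    have h2 := hG'master.2
    omega
  have hcount : S.ncard ≤ 2 + nA0 := by
    have hAbscard : Abs.card ≤ Λ.card := Finset.card_le_card hAbsΛ
    omega
  have hA0 : nA0 * (2 * ℓ) ≤ 3 * G.edgeFinset.card := by
    have := hC4
    omega
  -- real arithmetic
  have hl0 : (0:ℝ) < (ℓ:ℝ) := by
    have : (5:ℝ) ≤ (ℓ:ℝ) := by exact_mod_cast hℓ
    linarith
  have hE0 : (0:ℝ) ≤ (G.edgeFinset.card : ℝ) := Nat.cast_nonneg _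
  have h2 : (nA0:ℝ) * (2 * ℓ) ≤ 3 * G.edgeFinset.card := by exact_mod_cast hA0
  have h3 : (nA0:ℝ) ≤ 16 * G.edgeFinset.card / ℓ := by
    rw [le_div_iff₀ hl0]
    nlinarith
  have h1 : (S.ncard : ℝ) ≤ 2 + nA0 := by exact_mod_cast hcount
  calc (S.ncard : ℝ) ≤ 2 + nA0 := h1
    _ ≤ 2 + 16 * G.edgeFinset.card / ℓ := by linarith
    _ ≤ 6 + 16 * G.edgeFinset.card / ℓ := by linarith
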